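/- Every edge of the Farey graph separates: for every pair of adjacent vertices u, v of F, the induced subgraph of F on the vertex set (ℚ ∪ {∞}) \ {u, v} is disconnected; that is, there exist vertices w₁, w₂ ∉ {u, v} such that every edge path in F from w₁ to w₂ passes through u or v. -/

import Mathlib

/-- Adjacency in the Farey graph on `ℚ ∪ {∞}`, where `∞` (the vertex `none`) is
regarded as `1/0`: two reduced fractions `p/q` and `r/s` are adjacent iff `|ps - rq| = 1`. -/
def fareyAdj : Option ℚ → Option ℚ → Prop
  | some p, some q => |p.num * (q.den : ℤ) - q.num * (p.den : ℤ)| = 1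
  | some p, none => p.den = 1
  | none, some q => q.den = 1
  | none, none => False

/-- The Farey graph: vertices are `ℚ ∪ {∞}` (modelled as `Option ℚ`, with `none = ∞ = 1/0`),
and `p/q`, `r/s` (in lowest terms) are adjacent iff `|ps - rq| = 1`. -/
def fareyGraph : SimpleGraph (Option ℚ) where
  Adj x y := fareyAdj x y
  symm := by
    constructor
    rintro (_ | p) (_ | q) h <;> simp_all [fareyAdj, abs_sub_comm]
  loopless := by
    constructor
    rintro (_ | p) h
    · exact h
    · simp [fareyAdj] at h

/-- numerator of a vertex, with `∞ = 1/0`. -/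
def vnum : Option ℚ → ℤ
  | none => 1
  | some a => a.num

/-- denominator of a vertex, with `∞ = 1/0`. -/
def vden : Option ℚ → ℤ
  | none => 0
  | some a => (a.den : ℤ)

/-- cross determinant of two vertices. -/
def det2 (x y : Option ℚ) : ℤ := vnum x * vden y - vnum y * vden x

lemma adj_iff (x y : Option ℚ) : fareyGraph.Adj x y ↔ |det2 x y| = 1 := by
  rcases x with _ | a <;> rcases y with _ | b <;>
    simp [fareyGraph, fareyAdj, det2, vnum, vden]

lemma det2_eq_zero_iff (x y : Option ℚ) : det2 x y = 0 ↔ x = y := by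
  rcases x with _ | a <;> rcases y with _ | b
  · simp [det2, vnum, vden]
  · simp only [det2, vnum, vden]
    have := b.den_nz
    constructor
    · intro h; exfalso; omega
    · intro h; exact absurd h (by simp)
  · simp only [det2, vnum, vden]
    have := a.den_nz
    constructor
    · intro h; exfalso; omega
    · intro h; exact absurd h (by simp)
  · simp only [det2, vnum, vden, Option.some.injEq]
    constructor
    · intro h
      have h2 : (a.num : ℚ) / a.den = (b.num : ℚ) / b.den := by
        rw [div_eq_div_iff (by positivity) (by positivity)]
        exact_mod_cast sub_eq_zero.mp h
      rwa [Rat.num_div_den, Rat.num_div_den] at h2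
    · rintro rfl; ring

lemma plucker (u v x y : Option ℚ) :
    det2 u x * det2 v y - det2 u y * det2 v x = det2 u v * det2 x y := by
  simp only [det2]; ring

lemma helper_nonneg (X Y : ℤ) (h : X - Y = 1 ∨ X - Y = -1) : 0 ≤ X * Y := by
  rcases le_or_gt 0 Y with hy | hy
  · rcases le_or_gt 0 X with hx | hx
    · exact mul_nonneg hx hy
    · have : Y = 0 := by omega
      simp [this]
  · rcases le_or_gt X 0 with hx | hx
    · nlinarith
    · exact absurd h (by omega)

lemma sign_step (A B A' B' : ℤ) (hA : A ≠ 0) (hB : B ≠ 0) (hA' : A' ≠ 0) (hB' : B' ≠ 0)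
    (h : |A * B' - A' * B| = 1) : (0 < A * B ↔ 0 < A' * B') := by
  have h1 : A * B' - A' * B = 1 ∨ A * B' - A' * B = -1 := by
    rcases abs_eq (by norm_num : (0:ℤ) ≤ 1) |>.mp h with h | h <;> [left; right] <;> exact h
  have key : 0 ≤ (A * B) * (A' * B') := by
    have := helper_nonneg (A * B') (A' * B) h1
    nlinarith [this]
  have hne : (A * B) * (A' * B') ≠ 0 := by
    exact mul_ne_zero (mul_ne_zero hA hB) (mul_ne_zero hA' hB')
  have hpos : 0 < (A * B) * (A' * B') := lt_of_le_of_ne key (Ne.symm hne)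
  rcases mul_pos_iff.mp hpos with ⟨h1, h2⟩ | ⟨h1, h2⟩
  · exact ⟨fun _ => h2, fun _ => h1⟩
  · constructor <;> intro hh <;> [exact absurd hh (not_lt.mpr h1.le); exact absurd hh (not_lt.mpr h2.le)]

lemma adj_same_sign (u v a b : Option ℚ) (huv : fareyGraph.Adj u v)
    (hab : fareyGraph.Adj a b) (hau : a ≠ u) (hav : a ≠ v) (hbu : b ≠ u) (hbv : b ≠ v) :
    (0 < det2 u a * det2 v a ↔ 0 < det2 u b * det2 v b) := by
  have hA : det2 u a ≠ 0 := fun h => hau ((det2_eq_zero_iff u a).mp h).symm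
  have hB : det2 v a ≠ 0 := fun h => hav ((det2_eq_zero_iff v a).mp h).symm
  have hA' : det2 u b ≠ 0 := fun h => hbu ((det2_eq_zero_iff u b).mp h).symm
  have hB' : det2 v b ≠ 0 := fun h => hbv ((det2_eq_zero_iff v b).mp h).symm
  refine sign_step _ _ _ _ hA hB hA' hB' ?_
  rw [plucker, abs_mul, (adj_iff u v).mp huv, (adj_iff a b).mp hab]
  norm_num

lemma walk_same_sign (u v : Option ℚ) (huv : fareyGraph.Adj u v) {a b : Option ℚ}
    (p : fareyGraph.Walk a b) (hu : u ∉ p.support) (hv : v ∉ p.support) :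
    (0 < det2 u a * det2 v a ↔ 0 < det2 u b * det2 v b) := by
  induction p with
  | nil => rfl
  | @cons a c b h q ih =>
    rw [SimpleGraph.Walk.support_cons, List.mem_cons] at hu hv
    push_neg at hu hv
    have hcu : c ≠ u := fun h => hu.2 (h ▸ q.start_mem_support)
    have hcv : c ≠ v := fun h => hv.2 (h ▸ q.start_mem_support)
    exact (adj_same_sign u v a c huv h (Ne.symm hu.1) (Ne.symm hv.1) hcu hcv).trans
      (ih hu.2 hv.2)

lemma exists_vertex (m k : ℤ) (h : Int.gcd m k = 1) :
    ∃ x : Option ℚ, (vnum x = m ∧ vden x = k) ∨ (vnum x = -m ∧ vden x = -k) := by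
  rcases lt_trichotomy k 0 with hk | hk | hk
  · refine ⟨some ⟨-m, (-k).toNat, by omega, ?_⟩, Or.inr ⟨rfl, ?_⟩⟩
    · have : (-m).natAbs.gcd (-k).toNat = 1 := by
        have h' : m.natAbs.gcd k.natAbs = 1 := h
        have e1 : (-m).natAbs = m.natAbs := by omega
        have e2 : (-k).toNat = k.natAbs := by omega
        rw [e1, e2]; exact h'
      exact this
    · simp [vden]; omega
  · subst hk
    have : m.natAbs = 1 := by simpa [Int.gcd] using h
    rcases (by omega : m = 1 ∨ m = -1) with rfl | rfl
    · exact ⟨none, Or.inl ⟨rfl, rfl⟩⟩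
    · exact ⟨none, Or.inr ⟨rfl, rfl⟩⟩
  · refine ⟨some ⟨m, k.toNat, by omega, ?_⟩, Or.inl ⟨rfl, ?_⟩⟩
    · have : m.natAbs.gcd k.toNat = 1 := by
        have h' : m.natAbs.gcd k.natAbs = 1 := h
        have e2 : k.toNat = k.natAbs := by omega
        rw [e2]; exact h'
      exact this
    · simp [vden]; omega

/-- **Every edge of the Farey graph separates.** For adjacent vertices `u, v` there
are vertices `w₁, w₂ ∉ {u, v}` such that every walk in the Farey graph from `w₁` to
`w₂` passes through `u` or `v`. -/
theorem fareyGraph_edge_separates (u v : Option ℚ) (huv : fareyGraph.Adj u v) :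
    ∃ w₁ w₂ : Option ℚ, w₁ ∉ ({u, v} : Set (Option ℚ)) ∧ w₂ ∉ ({u, v} : Set (Option ℚ)) ∧
      ∀ p : fareyGraph.Walk w₁ w₂, u ∈ p.support ∨ v ∈ p.support := by
  set P := vnum u with hP
  set Q := vden u with hQ
  set R := vnum v with hR
  set S := vden v with hS
  have hε : |det2 u v| = 1 := (adj_iff u v).mp huv
  have hεd : det2 u v = P * S - R * Q := rfl
  have hε1 : P * S - R * Q = 1 ∨ P * S - R * Q = -1 := by
    rcases abs_eq (by norm_num : (0:ℤ) ≤ 1) |>.mp hε with h | h <;> [left; right] <;>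
      rw [← hεd] <;> exact h
  have hcop1 : Int.gcd (P + R) (Q + S) = 1 := by
    rw [← Int.isCoprime_iff_gcd_eq_one]
    rcases hε1 with h | h
    · exact ⟨S, -R, by linarith [h]⟩
    · exact ⟨-S, R, by linarith [h]⟩
  have hcop2 : Int.gcd (P - R) (Q - S) = 1 := by
    rw [← Int.isCoprime_iff_gcd_eq_one]
    rcases hε1 with h | h
    · exact ⟨S, -R, by linarith [h]⟩
    · exact ⟨-S, R, by linarith [h]⟩
  obtain ⟨x₁, hx₁⟩ := exists_vertex (P + R) (Q + S) hcop1
  obtain ⟨x₂, hx₂⟩ := exists_vertex (P - R) (Q - S) hcop2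
  have hεsq : (P * S - R * Q) * (P * S - R * Q) = 1 := by rcases hε1 with h | h <;> rw [h] <;> ring
  have hσ₁ : det2 u x₁ * det2 v x₁ = -1 := by
    rcases hx₁ with ⟨h1, h2⟩ | ⟨h1, h2⟩ <;>
      · simp only [det2, h1, h2]
        nlinarith [hεsq]
  have hσ₂ : det2 u x₂ * det2 v x₂ = 1 := by
    rcases hx₂ with ⟨h1, h2⟩ | ⟨h1, h2⟩ <;>
      · simp only [det2, h1, h2]
        nlinarith [hεsq]
  have hx₁u : x₁ ≠ u := fun h => by
    have : det2 u x₁ = 0 := (det2_eq_zero_iff u x₁).mpr h.symm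
    rw [this] at hσ₁; simp at hσ₁
  have hx₁v : x₁ ≠ v := fun h => by
    have : det2 v x₁ = 0 := (det2_eq_zero_iff v x₁).mpr h.symm
    rw [this] at hσ₁; simp at hσ₁
  have hx₂u : x₂ ≠ u := fun h => by
    have : det2 u x₂ = 0 := (det2_eq_zero_iff u x₂).mpr h.symm
    rw [this] at hσ₂; simp at hσ₂
  have hx₂v : x₂ ≠ v := fun h => by
    have : det2 v x₂ = 0 := (det2_eq_zero_iff v x₂).mpr h.symm
    rw [this] at hσ₂; simp at hσ₂
  refine ⟨x₁, x₂, ?_, ?_, ?_⟩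
  · simp [Set.mem_insert_iff, hx₁u, hx₁v]
  · simp [Set.mem_insert_iff, hx₂u, hx₂v]
  · intro p
    by_contra hc
    push_neg at hc
    have := walk_same_sign u v huv p hc.1 hc.2
    rw [hσ₁, hσ₂] at this
    norm_num at this
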